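/- Let G = (V, E, X) be a spatial graph with V finite, let θ ≥ 0, and let (R, A, k) be a similarity transformation of ℝ^p. Define transformed positions X'(v) = k·R(X(v)) + A. Then: (i) the thresholded subgraph sub((V,E,X'), kθ) equals sub((V,E,X), θ) as an abstract graph, so the hypernode partitions (connected components) of the two thresholded subgraphs coincide, and the induced super-edge relations between hypernodes coincide; and (ii) for every hypernode C, the average position of C computed from X' equals k·R applied to the average position of C computed from X, plus A. In other words, the spatial graph coarsening with average positioning is parameter equivariant under the similarity group action: ψ(f_θ(G), (R,A,k)) = f_{kθ}(ψ(G, (R,A,k))). -/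

import Mathlib

/-- The thresholded subgraph `sub(G, θ)` of a spatial graph `(V, E, X)`:
it keeps exactly the edges `(u,v) ∈ E` with `‖X u - X v‖ ≤ θ`. -/
def sub {p : ℕ} {V : Type*} (G : SimpleGraph V)
    (X : V → EuclideanSpace ℝ (Fin p)) (θ : ℝ) : SimpleGraph V where
  Adj u v := G.Adj u v ∧ ‖X u - X v‖ ≤ θ
  symm := by
    constructor
    intro u v h
    exact ⟨h.1.symm, by rw [norm_sub_rev]; exact h.2⟩
  loopless := ⟨fun v h => G.irrefl h.1⟩

/-- The hypernode containing `v` in the coarsening of `(V,E,X)` at scale `θ`: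
the connected component of `v` in the thresholded subgraph `sub(G, θ)`. -/
def hyperNode {p : ℕ} {V : Type*} (G : SimpleGraph V)
    (X : V → EuclideanSpace ℝ (Fin p)) (θ : ℝ) (v : V) : Set V :=
  {u | (sub G X θ).Reachable v u}

/-- The super-edge relation of the coarsened graph: two (distinct) hypernodes are
adjacent iff there is an original edge between a member of one and a member
of the other. -/
def superAdj {p : ℕ} {V : Type*} (G : SimpleGraph V)
    (X : V → EuclideanSpace ℝ (Fin p)) (θ : ℝ) (a b : V) : Prop :=
  hyperNode G X θ a ≠ hyperNode G X θ b ∧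
    ∃ u ∈ hyperNode G X θ a, ∃ v ∈ hyperNode G X θ b, G.Adj u v

/-- parameter equivariance of spatial graph coarsening with average
positioning under the similarity action `x ↦ k • R x + A`:
(i) `sub((V,E,X'), kθ) = sub((V,E,X), θ)`, the hypernode partitions (connected
components of the thresholded subgraphs) coincide, and the induced super-edge
relations coincide; (ii) for every hypernode `C`, the average position of `C`
computed from `X'` equals `k • R` applied to the average computed from `X`, plus `A`. -/
theorem coarsening_average_positioning_equivariant {p : ℕ} {V : Type*} [Fintype V]
    (G : SimpleGraph V) (X : V → EuclideanSpace ℝ (Fin p)) (θ : ℝ) (hθ : 0 ≤ θ)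
    (R : EuclideanSpace ℝ (Fin p) ≃ₗᵢ[ℝ] EuclideanSpace ℝ (Fin p))
    (A : EuclideanSpace ℝ (Fin p)) (k : ℝ) (hk : 0 < k)
    (X' : V → EuclideanSpace ℝ (Fin p)) (hX' : ∀ v, X' v = k • R (X v) + A) :
    -- (i) the thresholded subgraphs agree,
    sub G X' (k * θ) = sub G X θ ∧
    -- hence the hypernode partitions coincide,
    (∀ v, hyperNode G X' (k * θ) v = hyperNode G X θ v) ∧
    -- and the super-edge relations between hypernodes coincide;
    (∀ a b, superAdj G X' (k * θ) a b ↔ superAdj G X θ a b) ∧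
    -- (ii) the average position of every hypernode transforms equivariantly.
    (∀ v,
      ((((Set.toFinite (hyperNode G X θ v)).toFinset.card : ℝ))⁻¹ •
          ∑ u ∈ (Set.toFinite (hyperNode G X θ v)).toFinset, X' u) =
        k • R ((((Set.toFinite (hyperNode G X θ v)).toFinset.card : ℝ))⁻¹ •
          ∑ u ∈ (Set.toFinite (hyperNode G X θ v)).toFinset, X u) + A) := by
  have hnorm : ∀ u v : V, ‖X' u - X' v‖ = k * ‖X u - X v‖ := by
    intro u v
    rw [hX' u, hX' v]
    have : k • R (X u) + A - (k • R (X v) + A) = k • R (X u - X v) := by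
      rw [map_sub, smul_sub]; abel
    rw [this, norm_smul, R.norm_map, Real.norm_eq_abs, abs_of_pos hk]
  have hsub : sub G X' (k * θ) = sub G X θ := by
    ext u v
    simp only [sub, hnorm]
    constructor
    · rintro ⟨h1, h2⟩
      exact ⟨h1, by nlinarith⟩
    · rintro ⟨h1, h2⟩
      exact ⟨h1, by nlinarith⟩
  have hhyp : ∀ v, hyperNode G X' (k * θ) v = hyperNode G X θ v := by
    intro v; unfold hyperNode; rw [hsub]
  refine ⟨hsub, hhyp, ?_, ?_⟩
  · intro a b
    unfold superAdj
    rw [hhyp, hhyp]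
  · intro v
    have hv : v ∈ (Set.toFinite (hyperNode G X θ v)).toFinset := by
      simp only [Set.Finite.mem_toFinset, hyperNode, Set.mem_setOf_eq]
      exact SimpleGraph.Reachable.refl v
    have hcard : ((Set.toFinite (hyperNode G X θ v)).toFinset.card : ℝ) ≠ 0 := by
      have : 0 < (Set.toFinite (hyperNode G X θ v)).toFinset.card :=
        Finset.card_pos.mpr ⟨v, hv⟩
      exact_mod_cast this.ne'
    set s := (Set.toFinite (hyperNode G X θ v)).toFinset with hs
    have hsum : ∑ u ∈ s, X' u = k • R (∑ u ∈ s, X u) + (s.card : ℝ) • A := by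
      simp only [hX', Finset.sum_add_distrib, map_sum, Finset.smul_sum]
      congr 1
      rw [Finset.sum_const, ← Nat.cast_smul_eq_nsmul ℝ]
    rw [hsum, smul_add, smul_smul, smul_smul, inv_mul_cancel₀ hcard, one_smul,
      mul_comm, ← smul_smul, ← map_smul]
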